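/- Let T = (V,E) be a finite tree and O ⊂ V. If R is a star arrangement of equivalence classes of V∖O with |R| > 1, then the intersection ∩_{r∈R} ∂r contains exactly one observer. -/
import Mathlib


open MeasureTheory ProbabilityTheory SimpleGraph

variable {V : Type*}

/-- The unique path between two vertices of a tree, as a walk. -/
noncomputable def treePath (G : SimpleGraph V) (hG : G.IsTree) (u v : V) : G.Walk u v :=
  (hG.existsUnique_path u v).choose

/-- The equivalence class (for the relation "the connecting path avoids the observer
set `O`") of a non-observer vertex `u`. -/
def classOf (G : SimpleGraph V) (hG : G.IsTree) (O : Set V) (u : V) : Set V :=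
  {w | w ∉ O ∧ ∀ x ∈ (treePath G hG u w).support, x ∉ O}

/-- The boundary `∂r` of a set `r`: the observers adjacent to some vertex of `r`. -/
def boundary (G : SimpleGraph V) (O : Set V) (r : Set V) : Set V :=
  {o | o ∈ O ∧ ∃ u ∈ r, G.Adj o u}

/-- `V_{o;R}`: vertices whose path from `o` meets no class of `R`. -/
def subtreeVerts (G : SimpleGraph V) (hG : G.IsTree) (R : Set (Set V)) (o : V) : Set V :=
  {w | ∀ r ∈ R, ∀ x ∈ (treePath G hG o w).support, x ∉ r}

/-- Infection time of `v` for source `s` and edge delays `d`: the sum of the delays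
along the unique path from `s` to `v`. -/
noncomputable def infectionTime (G : SimpleGraph V) (hG : G.IsTree) (d : Sym2 V → ℝ)
    (s v : V) : ℝ :=
  (((treePath G hG s v).edges).map d).sum

/-- A class `r` is feasible for observer infection times `τ` if, for every `o ∈ ∂r` and
observers `o₁, o₂` in the subtree `T_{o;r}` with `o₁` an ancestor of `o₂` (i.e. `o₁` on
the path from `o` to `o₂`), `τ o₁ ≤ τ o₂`. -/
def feasible (G : SimpleGraph V) (hG : G.IsTree) (O : Set V) (τ : V → ℝ) (r : Set V) :
    Prop :=
  ∀ o ∈ boundary G O r, ∀ o₁ ∈ subtreeVerts G hG {r} o ∩ O,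
    ∀ o₂ ∈ subtreeVerts G hG {r} o ∩ O,
      o₁ ∈ (treePath G hG o o₂).support → τ o₁ ≤ τ o₂

section Aux

variable {G : SimpleGraph V} (hG : G.IsTree)

lemma treePath_isPath (u v : V) : (treePath G hG u v).IsPath :=
  (hG.existsUnique_path u v).choose_spec.1

lemma eq_treePath {u v : V} (p : G.Walk u v) (hp : p.IsPath) :
    p = treePath G hG u v := by
  have h := (hG.existsUnique_path u v).choose_spec
  exact (h.2 p hp)

lemma mem_support_treePath_symm {u v x : V} (hx : x ∈ (treePath G hG u v).support) :
    x ∈ (treePath G hG v u).support := by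
  have : (treePath G hG u v).reverse = treePath G hG v u :=
    eq_treePath hG _ ((treePath_isPath hG u v).reverse)
  rw [← this, Walk.support_reverse, List.mem_reverse]
  exact hx

lemma path_avoid_trans {O : Set V} {u w v : V}
    (h1 : ∀ x ∈ (treePath G hG u w).support, x ∉ O)
    (h2 : ∀ x ∈ (treePath G hG w v).support, x ∉ O) :
    ∀ x ∈ (treePath G hG u v).support, x ∉ O := by
  classical
  have heq : ((treePath G hG u w).append (treePath G hG w v)).bypass = treePath G hG u v :=
    eq_treePath hG _ (Walk.bypass_isPath _)
  intro x hx
  rw [← heq] at hx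
  have hx' := Walk.support_bypass_subset _ hx
  rw [Walk.support_append] at hx'
  rcases List.mem_append.1 hx' with h | h
  · exact h1 x h
  · exact h2 x (List.mem_of_mem_tail h)

lemma classOf_eq_of_mem {O : Set V} {u w : V} (hu : u ∉ O)
    (hw : w ∈ classOf G hG O u) : classOf G hG O u = classOf G hG O w := by
  obtain ⟨hwO, hwp⟩ := hw
  have hwu : ∀ x ∈ (treePath G hG w u).support, x ∉ O := fun x hx =>
    hwp x (mem_support_treePath_symm hG hx)
  ext v
  constructor
  · rintro ⟨hvO, hvp⟩
    exact ⟨hvO, path_avoid_trans hG hwu hvp⟩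
  · rintro ⟨hvO, hvp⟩
    exact ⟨hvO, path_avoid_trans hG hwp hvp⟩

lemma mem_classOf_of_mem_support {O : Set V} {u₀ a b x : V} (hu₀ : u₀ ∉ O)
    (ha : a ∈ classOf G hG O u₀) (hb : b ∈ classOf G hG O u₀)
    (hx : x ∈ (treePath G hG a b).support) : x ∈ classOf G hG O u₀ := by
  classical
  rw [classOf_eq_of_mem hG hu₀ ha] at hb ⊢
  obtain ⟨hbO, hbp⟩ := hb
  have hxO : x ∉ O := hbp x hx
  refine ⟨hxO, ?_⟩
  have heq : (treePath G hG a b).takeUntil x hx = treePath G hG a x :=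
    eq_treePath hG _ ((treePath_isPath hG a b).takeUntil hx)
  intro y hy
  rw [← heq] at hy
  exact hbp y (Walk.support_takeUntil_subset _ hx hy)

/-- If two distinct observers both lie in the boundary of a class, plus another class,
then a contradiction; packaged as: one path through each class. -/
lemma boundary_path {O : Set V} {u₀ : V} (hu₀ : u₀ ∉ O) {o o' : V}
    (hoO : o ∈ O) (ho'O : o' ∈ O) (hne : o ≠ o')
    (ho : o ∈ boundary G O (classOf G hG O u₀))
    (ho' : o' ∈ boundary G O (classOf G hG O u₀)) :
    ∃ x ∈ (treePath G hG o o').support, x ∈ classOf G hG O u₀ := by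
  obtain ⟨-, a, ha, hadj⟩ := ho
  obtain ⟨-, b, hb, hadj'⟩ := ho'
  set r := classOf G hG O u₀ with hr
  have hsup : ∀ x ∈ (treePath G hG a b).support, x ∈ r := fun x hx =>
    mem_classOf_of_mem_support hG hu₀ ha hb hx
  have hnotO : ∀ x ∈ (treePath G hG a b).support, x ∉ O := fun x hx => (hsup x hx).1
  -- build the walk o → a → ⋯ → b → o'
  let W : G.Walk o o' :=
    Walk.cons hadj ((treePath G hG a b).append (Walk.cons hadj'.symm Walk.nil))
  have hWsup : W.support = o :: ((treePath G hG a b).support ++ [o']) := by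
    simp [W, Walk.support_append]
  have hWpath : W.IsPath := by
    rw [Walk.isPath_def, hWsup]
    refine List.nodup_cons.2 ⟨?_, ?_⟩
    · intro hmem
      rcases List.mem_append.1 hmem with h | h
      · exact hnotO o h hoO
      · exact hne (List.mem_singleton.1 h)
    · refine List.Nodup.append ((treePath_isPath hG a b).support_nodup)
        (List.nodup_singleton o') ?_
      intro x hx hx'
      rw [List.mem_singleton] at hx'
      subst hx'
      exact hnotO x hx ho'O
  have hWeq : W = treePath G hG o o' := eq_treePath hG W hWpath
  refine ⟨a, ?_, ha⟩
  rw [← hWeq, hWsup]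
  exact List.mem_cons_of_mem _ (List.mem_append_left _ (Walk.start_mem_support _))

end Aux

/-- In a finite tree, if `R` is a star arrangement of equivalence classes of `V ∖ O` with
more than one class, then the intersection of their boundaries contains exactly one
observer. -/
theorem star_arrangement_unique_center
    [Fintype V] (G : SimpleGraph V) (hG : G.IsTree) (O : Set V)
    (R : Set (Set V)) (hR : ∀ r ∈ R, ∃ u, u ∉ O ∧ r = classOf G hG O u)
    (hcard : ∃ r₁ ∈ R, ∃ r₂ ∈ R, r₁ ≠ r₂)
    (hstar : (⋂ r ∈ R, boundary G O r).Nonempty) :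
    ∃! o : V, o ∈ ⋂ r ∈ R, boundary G O r := by
  obtain ⟨o, ho⟩ := hstar
  refine ⟨o, ho, fun o' ho' => ?_⟩
  by_contra hne
  obtain ⟨r₁, hr₁, r₂, hr₂, hr12⟩ := hcard
  obtain ⟨u₁, hu₁O, rfl⟩ := hR r₁ hr₁
  obtain ⟨u₂, hu₂O, rfl⟩ := hR r₂ hr₂
  rw [Set.mem_iInter₂] at ho ho'
  have hb₁ := ho _ hr₁
  have hb₁' := ho' _ hr₁
  have hb₂ := ho _ hr₂
  have hb₂' := ho' _ hr₂
  have hoO : o ∈ O := hb₁.1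
  have ho'O : o' ∈ O := hb₁'.1
  -- the two classes are disjoint
  have hdisj : ∀ x, x ∈ classOf G hG O u₁ → x ∉ classOf G hG O u₂ := by
    intro x hx1 hx2
    exact hr12 ((classOf_eq_of_mem hG hu₁O hx1).trans
      (classOf_eq_of_mem hG hu₂O hx2).symm)
  obtain ⟨x, hxsup, hx1⟩ :=
    boundary_path hG hu₁O ho'O hoO hne hb₁' hb₁
  obtain ⟨y, hysup, hy2⟩ :=
    boundary_path hG hu₂O ho'O hoO hne hb₂' hb₂
  -- x lies on the unique path o' → o and is in class 1; every vertex of the path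
  -- other than the endpoints... instead: show x is in class 2 as well, contradiction.
  -- Use that the path o' → o also arises through class 2: its interior is in class 2.
  -- We reconstruct: all support vertices of treePath o' o except o', o lie in class 2.
  obtain ⟨-, a, ha, hadj⟩ := hb₂'
  obtain ⟨-, b, hb, hadj'⟩ := hb₂
  have hsup : ∀ z ∈ (treePath G hG a b).support, z ∈ classOf G hG O u₂ := fun z hz =>
    mem_classOf_of_mem_support hG hu₂O ha hb hz
  have hnotO : ∀ z ∈ (treePath G hG a b).support, z ∉ O := fun z hz => (hsup z hz).1
  let W : G.Walk o' o :=
    Walk.cons hadj ((treePath G hG a b).append (Walk.cons hadj'.symm Walk.nil))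
  have hWsup : W.support = o' :: ((treePath G hG a b).support ++ [o]) := by
    simp [W, Walk.support_append]
  have hWpath : W.IsPath := by
    rw [Walk.isPath_def, hWsup]
    refine List.nodup_cons.2 ⟨?_, ?_⟩
    · intro hmem
      rcases List.mem_append.1 hmem with h | h
      · exact hnotO o' h ho'O
      · exact hne (List.mem_singleton.1 h)
    · refine List.Nodup.append ((treePath_isPath hG a b).support_nodup)
        (List.nodup_singleton o) ?_
      intro z hz hz'
      rw [List.mem_singleton] at hz'
      subst hz'
      exact hnotO z hz hoO
  have hWeq : W = treePath G hG o' o := eq_treePath hG W hWpath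
  rw [← hWeq, hWsup] at hxsup
  rcases List.mem_cons.1 hxsup with h | h
  · exact hx1.1 (h ▸ ho'O)
  rcases List.mem_append.1 h with h | h
  · exact hdisj x hx1 (hsup x h)
  · exact hx1.1 ((List.mem_singleton.1 h) ▸ hoO)
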